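/- Let T be a closed densely defined operator with T*T = TT*. Then T(I + T*T) = (I + T*T)T as unbounded operators (in particular, for x ∈ dom(T*T·T) with the appropriate domain conditions, T(x + T*Tx) = Tx + T*T(Tx)). -/

import Mathlib

open LinearPMap
open scoped LinearPMap InnerProduct

variable {H : Type*} [NormedAddCommGroup H] [InnerProductSpace ℂ H] [CompleteSpace H]

/-- The natural domain of the composition `g ∘ f`: `{x ∈ dom f : f x ∈ dom g}`. -/
def pcompDomain (g f : H →ₗ.[ℂ] H) : Submodule ℂ H where
  carrier := {x | ∃ hx : x ∈ f.domain, f ⟨x, hx⟩ ∈ g.domain}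
  add_mem' := by
    rintro a b ⟨ha, ha'⟩ ⟨hb, hb'⟩
    refine ⟨add_mem ha hb, ?_⟩
    have h : f ⟨a + b, add_mem ha hb⟩ = f ⟨a, ha⟩ + f ⟨b, hb⟩ := f.map_add ⟨a, ha⟩ ⟨b, hb⟩
    rw [h]; exact add_mem ha' hb'
  zero_mem' := ⟨zero_mem _, by
    have h : f ⟨0, zero_mem _⟩ = 0 := f.map_zero
    rw [h]; exact zero_mem _⟩
  smul_mem' := by
    rintro c a ⟨ha, ha'⟩
    refine ⟨Submodule.smul_mem _ c ha, ?_⟩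
    have h : f ⟨c • a, Submodule.smul_mem _ c ha⟩ = c • f ⟨a, ha⟩ := f.map_smul c ⟨a, ha⟩
    rw [h]; exact Submodule.smul_mem _ c ha'

/-- Composition `g ∘ f` of unbounded operators, with its natural domain
`{x ∈ dom f : f x ∈ dom g}`. -/
noncomputable def pcomp (g f : H →ₗ.[ℂ] H) : H →ₗ.[ℂ] H :=
  g.comp (f.domRestrict (pcompDomain g f)) (by
    rintro ⟨x, hx⟩
    obtain ⟨h1, h2⟩ := hx.1
    have : f.domRestrict (pcompDomain g f) ⟨x, hx⟩ = f ⟨x, h1⟩ :=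
      LinearPMap.domRestrict_apply rfl
    rw [this]; exact h2)

/-- The identity as an unbounded operator. -/
noncomputable def pid : H →ₗ.[ℂ] H := LinearMap.id.toPMap ⊤

noncomputable example (T : H →ₗ.[ℂ] H) : H →ₗ.[ℂ] H := pid + pcomp T† T

section Aux
variable {H : Type*} [NormedAddCommGroup H] [InnerProductSpace ℂ H] [CompleteSpace H]

lemma app_congr {f : H →ₗ.[ℂ] H} {x y : f.domain} (h : (x : H) = y) : f x = f y :=
  congr_arg f (Subtype.ext h)

lemma mem_pcomp_domain {g f : H →ₗ.[ℂ] H} {x : H} :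
    x ∈ (pcomp g f).domain ↔ ∃ hx : x ∈ f.domain, f ⟨x, hx⟩ ∈ g.domain :=
  ⟨fun h => h.1, fun h => ⟨h, h.1⟩⟩

lemma pcomp_apply (g f : H →ₗ.[ℂ] H) (x : (pcomp g f).domain)
    (h1 : (x : H) ∈ f.domain) (h2 : f ⟨x, h1⟩ ∈ g.domain) :
    pcomp g f x = g ⟨f ⟨x, h1⟩, h2⟩ := by
  show g.toFun _ = _
  rw [LinearPMap.toFun_eq_coe]
  exact congr_arg g (Subtype.ext (LinearPMap.domRestrict_apply rfl))

lemma mem_pid_add {S : H →ₗ.[ℂ] H} {x : H} : x ∈ (pid + S).domain ↔ x ∈ S.domain :=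
  ⟨fun h => h.2, fun h => ⟨trivial, h⟩⟩

lemma pid_add_apply (S : H →ₗ.[ℂ] H) (x : (pid + S).domain) (hx : (x : H) ∈ S.domain) :
    (pid + S : H →ₗ.[ℂ] H) x = (x : H) + S ⟨x, hx⟩ := rfl

end Aux

theorem stmt12 (T : H →ₗ.[ℂ] H) (hclosed : T.IsClosed)
    (hdense : Dense (T.domain : Set H)) (hnormal : pcomp T† T = pcomp T T†) :
    pcomp T (pid + pcomp T† T) = pcomp (pid + pcomp T† T) T := by
  obtain ⟨hdom, hval⟩ := LinearPMap.ext_iff.mp hnormal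
  apply LinearPMap.ext
  · ext x
    rw [mem_pcomp_domain, mem_pcomp_domain]
    constructor
    · rintro ⟨hx, hx'⟩
      have hxA : x ∈ (pcomp T† T).domain := mem_pid_add.mp hx
      obtain ⟨h1, h2⟩ := mem_pcomp_domain.mp hxA
      have e1 : (pid + pcomp T† T : H →ₗ.[ℂ] H) ⟨x, hx⟩ = x + (T†) ⟨T ⟨x, h1⟩, h2⟩ := by
        rw [pid_add_apply _ _ hxA, pcomp_apply T† T ⟨x, hxA⟩ h1 h2]
      rw [e1] at hx'
      have h3 : (T†) ⟨T ⟨x, h1⟩, h2⟩ ∈ T.domain := by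
        simpa using sub_mem hx' h1
      refine ⟨h1, ?_⟩
      rw [mem_pid_add, hdom, mem_pcomp_domain]
      exact ⟨h2, h3⟩
    · rintro ⟨h1, hTx⟩
      rw [mem_pid_add, hdom, mem_pcomp_domain] at hTx
      obtain ⟨h2, h3⟩ := hTx
      have hxA : x ∈ (pcomp T† T).domain := mem_pcomp_domain.mpr ⟨h1, h2⟩
      refine ⟨mem_pid_add.mpr hxA, ?_⟩
      have e1 : (pid + pcomp T† T : H →ₗ.[ℂ] H) ⟨x, mem_pid_add.mpr hxA⟩ = x + (T†) ⟨T ⟨x, h1⟩, h2⟩ := by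
        rw [pid_add_apply _ _ hxA, pcomp_apply T† T ⟨x, hxA⟩ h1 h2]
      rw [e1]
      exact add_mem h1 h3
  · intro x0 hx0 hy0
    generalize hxg : (⟨x0, hx0⟩ : (pcomp T (pid + pcomp T† T)).domain) = x
    generalize hyg : (⟨x0, hy0⟩ : (pcomp (pid + pcomp T† T) T).domain) = y
    have hxy : (x : H) = y := by rw [← hxg, ← hyg]
    obtain ⟨hx, hx'⟩ := mem_pcomp_domain.mp x.2
    have hxA : (x : H) ∈ (pcomp T† T).domain := mem_pid_add.mp hx
    obtain ⟨h1, h2⟩ := mem_pcomp_domain.mp hxA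
    have e1 : (pid + pcomp T† T : H →ₗ.[ℂ] H) ⟨(x : H), hx⟩ = (x : H) + (T†) ⟨T ⟨(x : H), h1⟩, h2⟩ := by
      rw [pid_add_apply _ _ hxA, pcomp_apply T† T ⟨(x : H), hxA⟩ h1 h2]
    have hx'' : (x : H) + (T†) ⟨T ⟨(x : H), h1⟩, h2⟩ ∈ T.domain := e1 ▸ hx'
    have h3 : (T†) ⟨T ⟨(x : H), h1⟩, h2⟩ ∈ T.domain := by
      simpa using sub_mem hx'' h1
    obtain ⟨k1, k2⟩ := mem_pcomp_domain.mp y.2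
    have kA : T ⟨(y : H), k1⟩ ∈ (pcomp T† T).domain := mem_pid_add.mp k2
    have kB : T ⟨(y : H), k1⟩ ∈ (pcomp T T†).domain := hdom ▸ kA
    obtain ⟨m1, m2⟩ := mem_pcomp_domain.mp kB
    have eT : T ⟨(x : H), h1⟩ = T ⟨(y : H), k1⟩ := app_congr hxy
    have e2 : T ⟨(T†) ⟨T ⟨(x : H), h1⟩, h2⟩, h3⟩ = T ⟨(T†) ⟨T ⟨(y : H), k1⟩, m1⟩, m2⟩ :=
      app_congr (app_congr eT)
    calc pcomp T (pid + pcomp T† T) x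
        = T ⟨(pid + pcomp T† T : H →ₗ.[ℂ] H) ⟨(x : H), hx⟩, hx'⟩ := pcomp_apply _ _ x hx hx'
      _ = T (⟨(x : H), h1⟩ + ⟨(T†) ⟨T ⟨(x : H), h1⟩, h2⟩, h3⟩) := app_congr e1
      _ = T ⟨(x : H), h1⟩ + T ⟨(T†) ⟨T ⟨(x : H), h1⟩, h2⟩, h3⟩ := T.map_add _ _
      _ = T ⟨(y : H), k1⟩ + T ⟨(T†) ⟨T ⟨(y : H), k1⟩, m1⟩, m2⟩ := by rw [e2]; rw [eT]
      _ = T ⟨(y : H), k1⟩ + pcomp T (T†) ⟨T ⟨(y : H), k1⟩, kB⟩ := by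
            rw [pcomp_apply T (T†) ⟨_, kB⟩ m1 m2]
      _ = T ⟨(y : H), k1⟩ + pcomp T† T ⟨T ⟨(y : H), k1⟩, kA⟩ := by
            exact congr_arg _ (@hval _ kA kB).symm
      _ = (pid + pcomp T† T : H →ₗ.[ℂ] H) ⟨T ⟨(y : H), k1⟩, k2⟩ := (pid_add_apply (pcomp T† T) ⟨T ⟨(y : H), k1⟩, k2⟩ kA).symm
      _ = pcomp (pid + pcomp T† T) T y := (pcomp_apply _ _ y k1 k2).symm
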